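/- Let f : ℝ → ℂ be measurable with f(x) = 0 for all x < 0, and suppose there exist A > 0 and m ∈ ℕ with ‖f(x)‖ ≤ A·(1+|x|)^m for all x (polynomial growth). Then the Fourier–Laplace transform h(z) = ∫_{0}^{∞} f(x)·exp(i·z·x) dx is well defined and complex differentiable (holomorphic) on the open upper half-plane {z ∈ ℂ : Im z > 0}. -/

import Mathlib

open MeasureTheory

lemma auxPoly (m : ℕ) {x : ℝ} (hx : 0 ≤ x) :
    (1 + x) ^ m ≤ 2 ^ m * (1 + x ^ m) := by
  have h1 : (1 + x) ^ m ≤ (2 * max 1 x) ^ m := by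
    apply pow_le_pow_left₀ (by linarith)
    rcases le_total 1 x with h | h
    · rw [max_eq_right h]; linarith
    · rw [max_eq_left h]; linarith
  have h2 : (max 1 x) ^ m ≤ 1 + x ^ m := by
    rcases le_total 1 x with h | h
    · rw [max_eq_right h]
      have : (0:ℝ) ≤ x ^ m := by positivity
      linarith [le_refl (x ^ m)]
    · rw [max_eq_left h]
      simp only [one_pow]
      have : (0:ℝ) ≤ x ^ m := by positivity
      linarith
  calc (1 + x) ^ m ≤ (2 * max 1 x) ^ m := h1
    _ = 2 ^ m * (max 1 x) ^ m := by rw [mul_pow]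
    _ ≤ 2 ^ m * (1 + x ^ m) := by
        apply mul_le_mul_of_nonneg_left h2 (by positivity)

lemma auxInt {b : ℝ} (hb : 0 < b) (m : ℕ) :
    IntegrableOn (fun x : ℝ => (1 + x) ^ m * Real.exp (-b * x)) (Set.Ioi 0) := by
  have h1 : IntegrableOn (fun x : ℝ => Real.exp (-b * x)) (Set.Ioi 0) :=
    exp_neg_integrableOn_Ioi 0 hb
  have h2 : IntegrableOn (fun x : ℝ => x ^ m * Real.exp (-b * x)) (Set.Ioi 0) := by
    have := integrableOn_rpow_mul_exp_neg_mul_rpow (p := 1) (s := m) (b := b)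
      ((by norm_num : (-1:ℝ) < 0).trans_le (Nat.cast_nonneg m)) one_pos hb
    refine this.congr_fun (fun x hx => ?_) measurableSet_Ioi
    rw [Set.mem_Ioi] at hx
    dsimp only
    rw [Real.rpow_natCast, Real.rpow_one]
  have hg : IntegrableOn
      (fun x : ℝ => 2 ^ m * Real.exp (-b * x) + 2 ^ m * (x ^ m * Real.exp (-b * x)))
      (Set.Ioi 0) := (h1.const_mul _).add (h2.const_mul _)
  refine hg.mono' ?_ ?_
  · exact (((continuous_const.add continuous_id).pow m).mul
      (Real.continuous_exp.comp (continuous_const.mul continuous_id))).aestronglyMeasurable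
  · filter_upwards [self_mem_ae_restrict measurableSet_Ioi] with x hx
    rw [Set.mem_Ioi] at hx
    have hx0 : (0:ℝ) ≤ x := hx.le
    have hexp : (0:ℝ) < Real.exp (-b * x) := Real.exp_pos _
    rw [Real.norm_eq_abs, abs_of_nonneg (by positivity)]
    have := auxPoly m hx0
    calc (1 + x) ^ m * Real.exp (-b * x)
        ≤ 2 ^ m * (1 + x ^ m) * Real.exp (-b * x) := by
          apply mul_le_mul_of_nonneg_right this hexp.le
      _ = 2 ^ m * Real.exp (-b * x) + 2 ^ m * (x ^ m * Real.exp (-b * x)) := by ring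

lemma norm_exp_I_mul (w : ℂ) (x : ℝ) :
    ‖Complex.exp (Complex.I * w * x)‖ = Real.exp (-w.im * x) := by
  rw [Complex.norm_exp]
  congr 1
  simp [Complex.mul_re, Complex.mul_im]

/-- The Fourier–Laplace transform `h(z) = ∫_{0}^{∞} f(x)·exp(izx) dx` of a measurable
function `f` of polynomial growth supported in `[0,∞)` is well defined (the integrand is
integrable) and holomorphic on the open upper half-plane. -/
theorem fourierLaplace_holomorphic (f : ℝ → ℂ) (hf : Measurable f)
    (hsupp : ∀ x < (0 : ℝ), f x = 0)
    (A : ℝ) (hA : 0 < A) (m : ℕ) (hgrowth : ∀ x : ℝ, ‖f x‖ ≤ A * (1 + |x|) ^ m) :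
    ∀ z : ℂ, 0 < z.im →
      IntegrableOn (fun x : ℝ => f x * Complex.exp (Complex.I * z * x)) (Set.Ioi 0) ∧
      DifferentiableAt ℂ
        (fun z : ℂ => ∫ x in Set.Ioi (0 : ℝ), f x * Complex.exp (Complex.I * z * x)) z := by
  -- measurability of the integrand, for any parameter w
  have hmeas : ∀ w : ℂ, AEStronglyMeasurable
      (fun x : ℝ => f x * Complex.exp (Complex.I * w * x))
      (volume.restrict (Set.Ioi (0:ℝ))) := by
    intro w
    exact (hf.aestronglyMeasurable.mul
      ((Complex.continuous_exp.comp
        ((continuous_const.mul Complex.continuous_ofReal))).aestronglyMeasurable)).restrict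
  -- integrability of the integrand, for any parameter with positive imaginary part
  have hInt : ∀ w : ℂ, 0 < w.im →
      IntegrableOn (fun x : ℝ => f x * Complex.exp (Complex.I * w * x)) (Set.Ioi 0) := by
    intro w hw
    refine (((auxInt hw m).const_mul A)).mono' (hmeas w) ?_
    filter_upwards [self_mem_ae_restrict measurableSet_Ioi] with x hx
    rw [Set.mem_Ioi] at hx
    rw [norm_mul, norm_exp_I_mul]
    calc ‖f x‖ * Real.exp (-w.im * x)
        ≤ A * (1 + |x|) ^ m * Real.exp (-w.im * x) := by
          apply mul_le_mul_of_nonneg_right (hgrowth x) (Real.exp_pos _).le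
      _ = A * ((1 + x) ^ m * Real.exp (-w.im * x)) := by
          rw [abs_of_nonneg hx.le]; ring
  intro z hz
  refine ⟨hInt z hz, ?_⟩
  set b : ℝ := z.im with hbdef
  have hb2 : 0 < b / 2 := by positivity
  -- dominated differentiation
  have key := hasDerivAt_integral_of_dominated_loc_of_deriv_le
    (F := fun (w : ℂ) (x : ℝ) => f x * Complex.exp (Complex.I * w * x))
    (F' := fun (w : ℂ) (x : ℝ) =>
      f x * (Complex.exp (Complex.I * w * x) * (Complex.I * x)))
    (μ := volume.restrict (Set.Ioi (0:ℝ)))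
    (x₀ := z)
    (bound := fun x : ℝ => A * ((1 + x) ^ (m + 1) * Real.exp (-(b / 2) * x)))
    (s := Metric.ball z (b / 2)) (Metric.ball_mem_nhds z hb2)
    (Filter.Eventually.of_forall hmeas)
    (hInt z hz)
    ((hf.aestronglyMeasurable.mul
      (((Complex.continuous_exp.comp
        ((continuous_const.mul Complex.continuous_ofReal))).mul
        (continuous_const.mul Complex.continuous_ofReal)).aestronglyMeasurable)).restrict)
    ?_ ((auxInt hb2 (m + 1)).const_mul A) ?_
  · exact key.2.differentiableAt
  · -- the bound on the derivative
    filter_upwards [self_mem_ae_restrict measurableSet_Ioi] with x hx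
    intro w hw
    rw [Set.mem_Ioi] at hx
    have him : b / 2 ≤ w.im := by
      have h1 : |w.im - z.im| ≤ ‖w - z‖ := by
        rw [← Complex.sub_im]
        exact Complex.abs_im_le_norm _
      have h2 : ‖w - z‖ < b / 2 := by
        rw [Metric.mem_ball, Complex.dist_eq] at hw
        exact hw
      have := abs_sub_lt_iff.mp (lt_of_le_of_lt h1 h2)
      simp only [← hbdef] at this ⊢
      linarith [this.2]
    rw [norm_mul, norm_mul, norm_exp_I_mul, norm_mul, Complex.norm_I,
      one_mul, Complex.norm_real, Real.norm_eq_abs, abs_of_nonneg hx.le]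
    have hexp : Real.exp (-w.im * x) ≤ Real.exp (-(b / 2) * x) := by
      apply Real.exp_le_exp.mpr
      have : (b / 2) * x ≤ w.im * x := mul_le_mul_of_nonneg_right him hx.le
      linarith
    calc ‖f x‖ * (Real.exp (-w.im * x) * x)
        ≤ (A * (1 + |x|) ^ m) * (Real.exp (-(b / 2) * x) * x) := by
          apply mul_le_mul (hgrowth x) ?_ (by positivity) ?_
          · exact mul_le_mul_of_nonneg_right hexp hx.le
          · positivity
      _ = A * ((1 + x) ^ m * x * Real.exp (-(b / 2) * x)) := by
          rw [abs_of_nonneg hx.le]; ring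
      _ ≤ A * ((1 + x) ^ (m + 1) * Real.exp (-(b / 2) * x)) := by
          apply mul_le_mul_of_nonneg_left ?_ hA.le
          apply mul_le_mul_of_nonneg_right ?_ (Real.exp_pos _).le
          rw [pow_succ]
          apply mul_le_mul_of_nonneg_left (by linarith) (by positivity)
  · -- the differentiability of the integrand in the parameter
    filter_upwards [self_mem_ae_restrict measurableSet_Ioi] with x hx
    intro w _
    have h0 : HasDerivAt (fun w : ℂ => Complex.I * w * (x:ℂ)) (Complex.I * x) w := by
      simpa using (((hasDerivAt_id w).const_mul Complex.I).mul_const (x:ℂ))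
    exact (h0.cexp.const_mul (f x))
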